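/- Let s ≤ t be real numbers and let a, b : [s, t] → ℝ be continuous functions satisfying a(v) − a(s) = (b(v) − b(s)) + ∫_s^v exp(−a(u)) du for every v ∈ [s, t]. Then ∫_s^t exp(a(t) − a(u)) du = −exp(a(t))·log(1 − exp(−a(t))·∫_s^t exp(b(t) − b(u)) du). -/

import Mathlib

open intervalIntegral Real

/-- Closed form for the damping integral `∫_s^t e^{a(t)-a(u)} du` via the driving path `b`. -/
theorem damping_integral_closed_form
    (s t : ℝ) (hst : s ≤ t) (a b : ℝ → ℝ)
    (ha : ContinuousOn a (Set.Icc s t))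
    (hb : ContinuousOn b (Set.Icc s t))
    (hab : ∀ v ∈ Set.Icc s t,
      a v - a s = (b v - b s) + ∫ u in s..v, Real.exp (-a u)) :
    ∫ u in s..t, Real.exp (a t - a u)
      = -Real.exp (a t)
          * Real.log (1 - Real.exp (-a t) * ∫ u in s..t, Real.exp (b t - b u)) := by
  set F : ℝ → ℝ := fun v => ∫ u in s..v, Real.exp (-a u) with hF
  set C : ℝ := Real.exp (b s - a s) with hC
  have hca : ContinuousOn (fun u => Real.exp (-a u)) (Set.Icc s t) :=
    Real.continuous_exp.comp_continuousOn ha.neg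
  have hcb : ContinuousOn (fun u => C * Real.exp (-b u)) (Set.Icc s t) :=
    (Real.continuous_exp.comp_continuousOn hb.neg).const_smul C
  have hia : MeasureTheory.IntegrableOn (fun u => Real.exp (-a u)) (Set.Icc s t) :=
    hca.integrableOn_Icc
  have hFc : ContinuousOn F (Set.Icc s t) := by
    have := intervalIntegral.continuousOn_primitive_interval
      (f := fun u => Real.exp (-a u)) (μ := MeasureTheory.volume) (a := s) (b := t)
      (by rwa [Set.uIcc_of_le hst])
    rwa [Set.uIcc_of_le hst] at this
  have hFd : ∀ v ∈ Set.Ioo s t, HasDerivAt F (Real.exp (-a v)) v := by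
    intro v hv
    have hmem : Set.Icc s t ∈ nhds v := Icc_mem_nhds hv.1 hv.2
    have hint : IntervalIntegrable (fun u => Real.exp (-a u)) MeasureTheory.volume s v := by
      rw [intervalIntegrable_iff_integrableOn_Icc_of_le hv.1.le]
      exact hia.mono_set (Set.Icc_subset_Icc_right hv.2.le)
    exact intervalIntegral.integral_hasDerivAt_right hint
      ((hca.mono Set.Ioo_subset_Icc_self).stronglyMeasurableAtFilter isOpen_Ioo _ hv)
      (hca.continuousAt hmem)
  have habmem : ∀ v ∈ Set.Icc s t, Real.exp (-a v) * Real.exp (F v) = C * Real.exp (-b v) := by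
    intro v hv
    have := hab v hv
    rw [← Real.exp_add, hC, ← Real.exp_add]
    exact congrArg Real.exp (by linarith)
  have hFs : F s = 0 := intervalIntegral.integral_same
  have key : ∫ u in s..t, C * Real.exp (-b u) = Real.exp (F t) - 1 := by
    have h1 : ∀ v ∈ Set.Ioo s t,
        HasDerivWithinAt (fun v => Real.exp (F v)) (C * Real.exp (-b v)) (Set.Ioi v) v := by
      intro v hv
      have := (hFd v hv).exp
      rw [mul_comm, habmem v (Set.Ioo_subset_Icc_self hv)] at this
      exact this.hasDerivWithinAt
    have h2 : IntervalIntegrable (fun u => C * Real.exp (-b u)) MeasureTheory.volume s t := by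
      rw [intervalIntegrable_iff_integrableOn_Icc_of_le hst]
      exact hcb.integrableOn_Icc
    have := intervalIntegral.integral_eq_sub_of_hasDeriv_right_of_le hst
      (Real.continuous_exp.comp_continuousOn hFc) h1 h2
    simp only [Function.comp_apply] at this
    rw [this, hFs, Real.exp_zero]
  have hC0 : C ≠ 0 := (Real.exp_pos _).ne'
  have hib : (∫ u in s..t, Real.exp (-b u)) = (Real.exp (F t) - 1) / C := by
    rw [intervalIntegral.integral_const_mul] at key
    field_simp
    linarith [key]
  have hL : (∫ u in s..t, Real.exp (a t - a u)) = Real.exp (a t) * F t := by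
    rw [hF, ← intervalIntegral.integral_const_mul]
    congr 1
    funext u
    rw [← Real.exp_add]
    ring_nf
  have hRb : (∫ u in s..t, Real.exp (b t - b u)) = Real.exp (b t) * ((Real.exp (F t) - 1) / C) := by
    rw [← hib, ← intervalIntegral.integral_const_mul]
    congr 1
    funext u
    rw [← Real.exp_add]
    ring_nf
  have habt := hab t ⟨hst, le_refl t⟩
  have hfac : Real.exp (-a t) * Real.exp (b t) / C = Real.exp (-(F t)) := by
    rw [hC, ← Real.exp_add, ← Real.exp_sub]
    congr 1
    linarith [habt]
  have hinner : 1 - Real.exp (-a t) * (∫ u in s..t, Real.exp (b t - b u)) = Real.exp (-(F t)) := by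
    rw [hRb]
    have : Real.exp (-a t) * (Real.exp (b t) * ((Real.exp (F t) - 1) / C))
        = Real.exp (-(F t)) * (Real.exp (F t) - 1) := by
      rw [← hfac]; ring
    rw [this, Real.exp_neg]
    field_simp
    ring
  rw [hL, hinner, Real.log_exp]
  ring
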